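/- (Anisotropic Poincaré–Sobolev inequality.) Let n ≥ 2, let p₁, …, pₙ satisfy 1 ≤ pᵢ < ∞, define 1/p = (1/n)·∑_{i=1}^n 1/pᵢ, assume ∑_{i=1}^n 1/pᵢ > 1, and set p* = np/(n−p). Then there exists a constant C = C(n, p₁, …, pₙ) such that for all v ∈ C_c^∞(ℝⁿ) (hence, by density, for all v in the anisotropic Sobolev space W₀^{1,p⃗}(Ω) of a bounded open set Ω): [ ∫ |v|^{p*} dx ]^{1/p*} ≤ C · ( ∑_{i=1}^n ∫ |∂v/∂xᵢ|^{pᵢ} dx )^{1/p}. -/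

import Mathlib

open MeasureTheory Function Set Filter
open scoped ENNReal NNReal Topology

/-- The harmonic-mean exponent `p` defined by `1/p = (1/n) ∑ᵢ 1/pᵢ`. -/
noncomputable def pbar (n : ℕ) (p : Fin n → ℝ) : ℝ := n / ∑ i, 1 / p i

/-- The anisotropic Sobolev exponent `p* = np/(n−p)`. -/
noncomputable def pstar (n : ℕ) (p : Fin n → ℝ) : ℝ :=
  n * pbar n p / (n - pbar n p)

namespace Stmt11Aux

variable {n : ℕ} {p : Fin n → ℝ}

lemma enn_rpow_sum {ι : Type*} (c : ℝ≥0∞) {s : Finset ι} {a : ι → ℝ}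
    (ha : ∀ i ∈ s, 0 ≤ a i) :
    c ^ (∑ i ∈ s, a i) = ∏ i ∈ s, c ^ a i := by
  induction s using Finset.cons_induction with
  | empty => simp
  | cons i s hi ih =>
      rw [Finset.forall_mem_cons] at ha
      rw [Finset.sum_cons, Finset.prod_cons,
        ENNReal.rpow_add_of_nonneg _ _ ha.1 (Finset.sum_nonneg ha.2), ih ha.2]

/-- Loomis–Whitney-type inequality with distinct functions (up to a constant `n^{n/(n-1)}`). -/
lemma loomis_whitney {n : ℕ} (hn : 2 ≤ n) (f : Fin n → (Fin n → ℝ) → ℝ≥0∞)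
    (hf : ∀ i, Measurable (f i)) (hB0 : ∀ i, ∫⁻ x, f i x ≠ 0)
    (hBt : ∀ i, ∫⁻ x, f i x ≠ ∞) :
    ∫⁻ x, ∏ i, (∫⁻ t, f i (Function.update x i t)) ^ ((1:ℝ)/((n:ℝ)-1)) ≤
      (n : ℝ≥0∞) ^ ((n:ℝ)/((n:ℝ)-1)) * ∏ i, (∫⁻ x, f i x) ^ ((1:ℝ)/((n:ℝ)-1)) := by
  have hn1 : (1:ℝ) < n := by exact_mod_cast hn.trans_lt' one_lt_two
  have hn1' : (0:ℝ) < (n:ℝ) - 1 := by linarith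
  have hr0 : (0:ℝ) ≤ 1/((n:ℝ)-1) := by positivity
  set r : ℝ := 1/((n:ℝ)-1) with hr
  set B : Fin n → ℝ≥0∞ := fun i => ∫⁻ x, f i x with hB
  set c : Fin n → ℝ≥0∞ := fun i => (B i)⁻¹ with hc
  have hc0 : ∀ i, c i ≠ 0 := fun i => by simp [hc, hB, hBt i]
  have hct : ∀ i, c i ≠ ∞ := fun i => by simp [hc, hB, hB0 i]
  set F : (Fin n → ℝ) → ℝ≥0∞ := fun x => ∑ j, c j * f j x with hF
  have hFm : Measurable F := by
    apply Finset.measurable_sum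
    exact fun j _ => (hf j).const_mul _
  have hconj : ((Fintype.card (Fin n) : ℝ)).HolderConjugate ((n:ℝ)/((n:ℝ)-1)) := by
    simp only [Fintype.card_fin]
    exact Real.HolderConjugate.conjExponent hn1
  have key : ∫⁻ x, ∏ i, (∫⁻ t, F (Function.update x i t)) ^ ((1:ℝ)/((Fintype.card (Fin n):ℝ)-1))
      ≤ (∫⁻ x, F x) ^ ((n:ℝ)/((n:ℝ)-1)) := by
    rw [volume_pi]
    exact lintegral_prod_lintegral_pow_le _ hconj hFm
  simp only [Fintype.card_fin] at key
  have hFint : ∫⁻ x, F x = (n : ℝ≥0∞) := by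
    rw [hF]
    rw [lintegral_finset_sum _ (fun j _ => (hf j).const_mul _)]
    have : ∀ j : Fin n, ∫⁻ x, c j * f j x = 1 := by
      intro j
      rw [lintegral_const_mul _ (hf j), hc]
      exact ENNReal.inv_mul_cancel (hB0 j) (hBt j)
    simp [this]
  -- measurability of the inner marginal integrals
  have hIm : ∀ i : Fin n, Measurable fun x => ∫⁻ t, f i (Function.update x i t) := by
    intro i
    have := ((hf i).lmarginal (μ := fun _ : Fin n => (volume : Measure ℝ)) (s := {i}))
    rwa [lmarginal_singleton] at this
  have hlow : ∀ (x : Fin n → ℝ) (i : Fin n),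
      c i * ∫⁻ t, f i (Function.update x i t) ≤ ∫⁻ t, F (Function.update x i t) := by
    intro x i
    rw [← lintegral_const_mul' _ _ (hct i)]
    refine lintegral_mono fun t => ?_
    exact Finset.single_le_sum (f := fun j => c j * f j (Function.update x i t))
      (fun j _ => zero_le) (Finset.mem_univ i)
  have hstep : (∏ i, (c i) ^ r) * (∫⁻ x, ∏ i, (∫⁻ t, f i (Function.update x i t)) ^ r)
      ≤ (n : ℝ≥0∞) ^ ((n:ℝ)/((n:ℝ)-1)) := by
    rw [← hFint]
    rw [← lintegral_const_mul' _ _ (by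
      refine (ENNReal.prod_lt_top fun i _ => ?_).ne
      exact (ENNReal.rpow_lt_top_of_nonneg hr0 (hct i)))]
    refine le_trans (lintegral_mono fun x => ?_) key
    rw [← Finset.prod_mul_distrib]
    refine Finset.prod_le_prod' fun i _ => ?_
    rw [← ENNReal.mul_rpow_of_nonneg _ _ hr0]
    exact ENNReal.rpow_le_rpow (hlow x i) hr0
  have hcancel : (∏ i, (B i) ^ r) * (∏ i, (c i) ^ r) = 1 := by
    rw [← Finset.prod_mul_distrib]
    refine Finset.prod_eq_one fun i _ => ?_
    rw [← ENNReal.mul_rpow_of_nonneg _ _ hr0, hc, ENNReal.mul_inv_cancel (hB0 i) (hBt i),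
      ENNReal.one_rpow]
  calc ∫⁻ x, ∏ i, (∫⁻ t, f i (Function.update x i t)) ^ r
      = (∏ i, (B i) ^ r) * ((∏ i, (c i) ^ r) *
          ∫⁻ x, ∏ i, (∫⁻ t, f i (Function.update x i t)) ^ r) := by
        rw [← mul_assoc, hcancel, one_mul]
    _ ≤ (∏ i, (B i) ^ r) * (n : ℝ≥0∞) ^ ((n:ℝ)/((n:ℝ)-1)) := mul_le_mul_right hstep _
    _ = (n : ℝ≥0∞) ^ ((n:ℝ)/((n:ℝ)-1)) * ∏ i, (B i) ^ r := mul_comm _ _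


/-- derivative of `fun y => |y| ^ t` for `1 < t`. -/
noncomputable def absPowDeriv (t : ℝ) (y : ℝ) : ℝ := t * (|y| ^ (t - 2) * y)

lemma absPowDeriv_eq_sign {t : ℝ} (ht : 1 < t) (y : ℝ) :
    absPowDeriv t y = t * |y| ^ (t - 1) * Real.sign y := by
  rcases lt_trichotomy y 0 with h | rfl | h
  · rw [absPowDeriv, Real.sign_of_neg h]
    have : y = -|y| := by rw [abs_of_neg h]; ring
    nth_rewrite 2 [this]
    have h1 : (0:ℝ) < |y| := abs_pos.mpr h.ne
    rw [show (t:ℝ) - 1 = (t - 2) + 1 by ring, Real.rpow_add h1, Real.rpow_one]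
    ring
  · simp [absPowDeriv, Real.sign_zero, Real.zero_rpow (by norm_num; linarith : t - 1 ≠ 0)]
  · rw [absPowDeriv, Real.sign_of_pos h, abs_of_pos h]
    rw [show (t:ℝ) - 1 = (t - 2) + 1 by ring, Real.rpow_add h, Real.rpow_one]
    ring

lemma abs_absPowDeriv_le {t : ℝ} (ht : 1 < t) (y : ℝ) :
    |absPowDeriv t y| ≤ t * |y| ^ (t - 1) := by
  rw [absPowDeriv_eq_sign ht]
  rw [abs_mul, abs_mul]
  have h1 : 0 ≤ |y| ^ (t-1) := Real.rpow_nonneg (abs_nonneg y) _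
  have h2 : |Real.sign y| ≤ 1 := by
    rcases Real.sign_apply_eq y with h | h | h <;> simp [h]
  calc |(t:ℝ)| * |(|y| ^ (t-1))| * |Real.sign y| ≤ |(t:ℝ)| * |(|y| ^ (t-1))| * 1 := by
        exact mul_le_mul_of_nonneg_left h2 (by positivity)
    _ = t * |y| ^ (t-1) := by
        rw [mul_one, abs_of_nonneg (by linarith : (0:ℝ) ≤ t), abs_of_nonneg h1]

lemma hasDerivAt_abs_rpow {t : ℝ} (ht : 1 < t) (y : ℝ) :
    HasDerivAt (fun z => |z| ^ t) (absPowDeriv t y) y := by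
  rcases lt_trichotomy y 0 with h | rfl | h
  · have hev : (fun z : ℝ => (-z) ^ t) =ᶠ[𝓝 y] fun z => |z| ^ t := by
      filter_upwards [Iio_mem_nhds h] with z hz
      rw [abs_of_neg hz]
    have hd : HasDerivAt (fun z : ℝ => (-z) ^ t) (t * (-y) ^ (t-1) * (-1)) y := by
      have h1 : HasDerivAt (fun z : ℝ => -z) (-1) y := (hasDerivAt_id y).neg
      exact (Real.hasDerivAt_rpow_const (p := t) (Or.inl (by linarith))).comp y h1
    refine (hd.congr_of_eventuallyEq hev.symm).congr_deriv ?_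
    rw [absPowDeriv_eq_sign ht, Real.sign_of_neg h, abs_of_neg h]
    try ring
  · have : absPowDeriv t 0 = 0 := by simp [absPowDeriv]
    rw [this]
    rw [hasDerivAt_iff_tendsto]
    have heq : ∀ z : ℝ, ‖z - 0‖⁻¹ * ‖|z| ^ t - |(0:ℝ)| ^ t - (z - 0) • (0:ℝ)‖
        = |z| ^ (t - 1) := by
      intro z
      rcases eq_or_ne z 0 with rfl | hz
      · simp [Real.zero_rpow (by norm_num; linarith : t - 1 ≠ 0), abs_zero,
          Real.zero_rpow (by linarith : t ≠ 0)]
      · have h1 : (0:ℝ) < |z| := abs_pos.mpr hz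
        simp only [sub_zero, smul_zero, abs_zero, Real.zero_rpow (by linarith : t ≠ 0),
          sub_zero, Real.norm_eq_abs]
        rw [abs_of_nonneg (Real.rpow_nonneg (abs_nonneg z) t)]
        rw [show t = (t - 1) + 1 by ring, Real.rpow_add h1, Real.rpow_one]
        field_simp
        rw [show t - 1 + 1 - 1 = t - 1 by ring]
    simp only [heq]
    have : ContinuousAt (fun z : ℝ => |z| ^ (t-1)) 0 := by
      exact (Real.continuousAt_rpow_const _ _ (Or.inr (by linarith))).comp
        continuous_abs.continuousAt
    have h0 := this.tendsto
    simpa [Real.zero_rpow (by norm_num; linarith : t - 1 ≠ 0)] using h0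
  · have hev : (fun z : ℝ => z ^ t) =ᶠ[𝓝 y] fun z => |z| ^ t := by
      filter_upwards [Ioi_mem_nhds h] with z hz
      rw [abs_of_pos hz]
    have hd : HasDerivAt (fun z : ℝ => z ^ t) (t * y ^ (t-1)) y :=
      Real.hasDerivAt_rpow_const (p := t) (Or.inl h.ne')
    refine (hd.congr_of_eventuallyEq hev.symm).congr_deriv ?_
    rw [absPowDeriv_eq_sign ht, Real.sign_of_pos h, abs_of_pos h]
    try ring

lemma continuous_absPowDeriv {t : ℝ} (ht : 1 < t) : Continuous (absPowDeriv t) := by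
  rw [continuous_iff_continuousAt]
  intro y
  rcases eq_or_ne y 0 with rfl | hy
  · have h1 : Tendsto (fun z : ℝ => t * |z| ^ (t-1)) (𝓝 0) (𝓝 0) := by
      have : ContinuousAt (fun z : ℝ => |z| ^ (t-1)) 0 :=
        (Real.continuousAt_rpow_const _ _ (Or.inr (by linarith))).comp
          continuous_abs.continuousAt
      have h0 := this.tendsto
      rw [abs_zero, Real.zero_rpow (by norm_num; linarith : t - 1 ≠ 0)] at h0
      simpa using h0.const_mul t
    have h2 : Tendsto (absPowDeriv t) (𝓝 0) (𝓝 0) := by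
      refine squeeze_zero_norm (fun z => ?_) h1
      exact abs_absPowDeriv_le ht z
    have : absPowDeriv t 0 = 0 := by simp [absPowDeriv]
    rw [ContinuousAt, this]
    exact h2
  · have h1 : ContinuousAt (fun z : ℝ => |z| ^ (t-2)) y :=
      (Real.continuousAt_rpow_const _ _ (Or.inl (abs_ne_zero.mpr hy))).comp
        continuous_abs.continuousAt
    exact (continuousAt_const.mul (h1.mul continuousAt_id))

lemma contDiff_abs_rpow {t : ℝ} (ht : 1 < t) : ContDiff ℝ 1 (fun z : ℝ => |z| ^ t) := by
  rw [contDiff_one_iff_deriv]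
  have hd : ∀ y, deriv (fun z : ℝ => |z| ^ t) y = absPowDeriv t y :=
    fun y => (hasDerivAt_abs_rpow ht y).deriv
  refine ⟨fun y => (hasDerivAt_abs_rpow ht y).differentiableAt, ?_⟩
  rw [funext hd]
  exact continuous_absPowDeriv ht

/-- Pointwise FTC bound keeping the direction of differentiation. -/
lemma pointwise_ftc {n : ℕ} {w : (Fin n → ℝ) → ℝ} (hw : ContDiff ℝ 1 w)
    (h2w : HasCompactSupport w) (x : Fin n → ℝ) (i : Fin n) :
    (‖w x‖₊ : ℝ≥0∞) ≤ ∫⁻ t, ‖fderiv ℝ w (update x i t) (Pi.single i 1)‖₊ := by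
  calc (‖w x‖₊ : ℝ≥0∞)
      ≤ ∫⁻ t in Iic (x i), ‖deriv (w ∘ update x i) t‖₊ := by
        apply le_trans (by simp) (HasCompactSupport.enorm_le_lintegral_Ici_deriv _ _ _)
        · exact hw.comp (by convert contDiff_update 1 x i)
        · exact h2w.comp_isClosedEmbedding (isClosedEmbedding_update x i)
    _ ≤ ∫⁻ t, ‖deriv (w ∘ update x i) t‖₊ :=
        lintegral_mono' Measure.restrict_le_self le_rfl
    _ = ∫⁻ t, ‖fderiv ℝ w (update x i t) (Pi.single i 1)‖₊ := by
        congr with t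
        rw [fderiv_comp_deriv _ (hw.differentiable one_ne_zero).differentiableAt
          (hasDerivAt_update x i t).differentiableAt, deriv_update]


lemma hS_le (hp : ∀ i, 1 ≤ p i) : ∑ i, 1 / p i ≤ n := by
  calc ∑ i, 1 / p i ≤ ∑ _i : Fin n, (1:ℝ) := by
        refine Finset.sum_le_sum fun i _ => ?_
        rw [div_le_one (by linarith [hp i])]
        linarith [hp i]
    _ = n := by simp

lemma pstar_eq (hn : 2 ≤ n) (hsum : 1 < ∑ i, 1 / p i) :
    pstar n p = n / (∑ i, 1 / p i - 1) := by
  have hS0 : (0:ℝ) < ∑ i, 1 / p i := by linarith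
  have hn0 : (0:ℝ) < n := by
    have : (2:ℝ) ≤ n := by exact_mod_cast hn
    linarith
  rw [pstar, pbar]
  rw [div_eq_div_iff]
  · field_simp
  · rw [sub_ne_zero]
    intro h
    have h2 : (n:ℝ) * (∑ i, 1 / p i) = n := by
      field_simp at h
      linarith [h]
    nlinarith
  · linarith

lemma pstar_pos (hn : 2 ≤ n) (hp : ∀ i, 1 ≤ p i) (hsum : 1 < ∑ i, 1 / p i) :
    1 < pstar n p := by
  have h1 := hS_le hp
  have hn0 : (0:ℝ) < n := by
    have : (2:ℝ) ≤ n := by exact_mod_cast hn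
    linarith
  rw [pstar_eq hn hsum, lt_div_iff₀ (by linarith)]
  linarith

-- finiteness helper
lemma lint_rpow_ne_top {α : Type*} [MeasurableSpace α] [TopologicalSpace α]
    [OpensMeasurableSpace α] {μ : Measure α} [IsFiniteMeasureOnCompacts μ]
    {g : α → ℝ} (hg : Continuous g)
    (h2g : HasCompactSupport g) {q : ℝ} (hq : 0 < q) :
    ∫⁻ x, (‖g x‖₊ : ℝ≥0∞) ^ q ∂μ ≠ ∞ := by
  have heq : ∀ x, (‖g x‖₊ : ℝ≥0∞) ^ q = (‖|g x| ^ q‖₊ : ℝ≥0∞) := by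
    intro x
    rw [Real.nnnorm_rpow_of_nonneg (abs_nonneg _), Real.nnnorm_abs,
      ENNReal.coe_rpow_of_nonneg _ hq.le]
  simp_rw [heq]
  have hc : Continuous fun x => |g x| ^ q :=
    hg.abs.rpow_const (fun x => Or.inr hq.le)
  have hcs : HasCompactSupport fun x => |g x| ^ q := by
    have : (fun x => |g x| ^ q) = (fun y : ℝ => |y| ^ q) ∘ g := rfl
    rw [this]
    exact h2g.comp_left (by simp [Real.zero_rpow hq.ne'])
  exact (hc.integrable_of_hasCompactSupport hcs).2.ne

set_option maxHeartbeats 2000000 in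
/-- The core anisotropic Sobolev inequality, on the product space `Fin n → ℝ`,
in `ℝ≥0∞`-valued form. -/
theorem core (hn : 2 ≤ n) (hp : ∀ i, 1 ≤ p i) (hsum : 1 < ∑ i, 1 / p i) :
    ∃ K : ℝ≥0∞, K ≠ 0 ∧ K ≠ ∞ ∧
      ∀ v : (Fin n → ℝ) → ℝ, ContDiff ℝ 1 v → HasCompactSupport v →
        (∫⁻ x, (‖v x‖₊ : ℝ≥0∞) ^ pstar n p) ^ (1 / pstar n p) ≤
          K * (∑ i, ∫⁻ x, (‖fderiv ℝ v x (Pi.single i 1)‖₊ : ℝ≥0∞) ^ p i) ^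
            (1 / pbar n p) := by
  classical
  have hn1 : (1:ℝ) < n := by exact_mod_cast hn.trans_lt' one_lt_two
  have hn0 : (0:ℝ) < n := by linarith
  have hn1' : (0:ℝ) < (n:ℝ) - 1 := by linarith
  set S : ℝ := ∑ i, 1 / p i with hS
  have hS1 : 1 < S := hsum
  have hSn : S ≤ n := hS_le hp
  set P : ℝ := pstar n p with hPdef
  have hPeq : P = n / (S - 1) := pstar_eq hn hsum
  have hP1 : 1 < P := pstar_pos hn hp hsum
  have hP0 : 0 < P := by linarith
  set r : ℝ := 1 / ((n:ℝ) - 1) with hr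
  have hr0 : 0 ≤ r := by positivity
  set t : Fin n → ℝ := fun i => 1 + P * (1 - 1 / p i) with ht
  have hpi0 : ∀ i, 0 < p i := fun i => by linarith [hp i]
  have hti1 : ∀ i, 1 ≤ t i := by
    intro i
    have h1 : 0 ≤ 1 - 1 / p i := by
      rw [sub_nonneg, div_le_one (hpi0 i)]
      exact hp i
    have h2 : 0 ≤ P * (1 - 1 / p i) := mul_nonneg (by linarith) h1
    simp only [ht]
    linarith
  have hti_of_lt : ∀ i, 1 < p i → 1 < t i := by
    intro i hpi
    have h1 : 0 < 1 - 1 / p i := by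
      rw [sub_pos, div_lt_one (hpi0 i)]
      exact hpi
    have h2 : 0 < P * (1 - 1 / p i) := mul_pos (by linarith) h1
    simp only [ht]
    linarith
  have hti_of_eq : ∀ i, ¬(1 < p i) → t i = 1 := by
    intro i hpi
    have : p i = 1 := le_antisymm (not_lt.mp hpi) (hp i)
    simp [ht, this]
  have ht_sum : ∑ i, t i = ((n:ℝ) - 1) * P := by
    have h1 : ∑ i, t i = n + P * ((n:ℝ) - S) := by
      have e1 : ∑ i, t i = ∑ i : Fin n, (1:ℝ) + ∑ i, P * (1 - 1/p i) := by
        rw [← Finset.sum_add_distrib]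
      have e2 : ∑ i, P * (1 - 1/p i) = P * ∑ i, (1 - 1/p i) := by
        rw [Finset.mul_sum]
      have e3 : ∑ i, ((1:ℝ) - 1/p i) = (n:ℝ) - S := by
        rw [Finset.sum_sub_distrib, hS]
        simp
      rw [e1, e2, e3]
      simp
    rw [h1, hPeq]
    have hS1' : S - 1 ≠ 0 := by linarith
    field_simp
    ring
  -- more exponent bookkeeping
  have hrP : ∀ i, 0 ≤ t i * r := fun i => mul_nonneg (by linarith [hti1 i]) hr0
  have htr_sum : ∑ i, t i * r = P := by
    rw [← Finset.sum_mul, ht_sum, hr]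
    field_simp
  have he0 : (0:ℝ) ≤ ((n:ℝ) - 1) / n := by positivity
  have hei0 : ∀ i, (0:ℝ) ≤ 1 - 1 / p i := by
    intro i
    rw [sub_nonneg, div_le_one (hpi0 i)]
    exact hp i
  set θ : ℝ := ((n:ℝ) - S) * r with hθdef
  have hθsum : ∑ i, (1 - 1 / p i) * r = θ := by
    rw [← Finset.sum_mul]
    congr 1
    rw [Finset.sum_sub_distrib, hS]
    simp
  have hθ0 : 0 ≤ θ := mul_nonneg (by linarith) hr0
  have h1θ : 1 - θ = (S - 1) * r := by
    rw [hθdef, hr]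
    field_simp
    ring
  have hθ1 : θ < 1 := by
    nlinarith [mul_pos (show (0:ℝ) < S - 1 by linarith) (show (0:ℝ) < r by rw [hr]; positivity)]
  -- the constant
  set K0 : ℝ≥0∞ := (n : ℝ≥0∞) ^ ((n:ℝ)/((n:ℝ)-1)) * ∏ i, ENNReal.ofReal (t i) ^ r with hK0
  have hK0ne : K0 ≠ 0 := by
    rw [hK0]
    refine mul_ne_zero ?_ ?_
    · simp [ENNReal.rpow_eq_zero_iff]
      intro h; exact absurd h (by positivity)
    · refine (Finset.prod_ne_zero_iff).mpr fun i _ => ?_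
      simp only [ne_eq, ENNReal.rpow_eq_zero_iff, not_or]
      constructor
      · rintro ⟨h, -⟩
        rw [ENNReal.ofReal_eq_zero] at h
        linarith [hti1 i]
      · rintro ⟨h, -⟩
        exact ENNReal.ofReal_ne_top h
  have hK0t : K0 ≠ ∞ := by
    rw [hK0]
    refine ENNReal.mul_ne_top ?_ ?_
    · exact ENNReal.rpow_ne_top_of_nonneg (by positivity) (by simp)
    · refine (ENNReal.prod_lt_top fun i _ => ?_).ne
      exact ENNReal.rpow_lt_top_of_nonneg hr0 ENNReal.ofReal_ne_top
  refine ⟨K0 ^ (((n:ℝ) - 1) / n), ?_, ?_, ?_⟩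
  · simp only [ne_eq, ENNReal.rpow_eq_zero_iff, not_or]
    exact ⟨fun ⟨h, _⟩ => hK0ne h, fun ⟨h, _⟩ => hK0t h⟩
  · exact ENNReal.rpow_ne_top_of_nonneg he0 hK0t
  intro v hv h2v
  set D : Fin n → (Fin n → ℝ) → ℝ := fun i x => fderiv ℝ v x (Pi.single i 1) with hD
  set X : ℝ≥0∞ := ∫⁻ x, (‖v x‖₊ : ℝ≥0∞) ^ P with hX
  set A : Fin n → ℝ≥0∞ := fun i => ∫⁻ x, (‖D i x‖₊ : ℝ≥0∞) ^ p i with hA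
  have hvc : Continuous v := hv.continuous
  have hDvc : ∀ i, Continuous (D i) := fun i =>
    (hv.continuous_fderiv one_ne_zero).clm_apply continuous_const
  have hDvcs : ∀ i, HasCompactSupport (D i) := fun i => h2v.fderiv_apply ℝ _
  have hXt : X ≠ ∞ := lint_rpow_ne_top (μ := volume) hvc h2v hP0
  have hAt : ∀ i, A i ≠ ∞ := fun i => lint_rpow_ne_top (μ := volume) (hDvc i) (hDvcs i) (hpi0 i)
  by_cases hX0 : X = 0
  · rw [hX0, ENNReal.zero_rpow_of_pos (by positivity)]
    exact zero_le
  -- the functions wᵢ = |v|^{tᵢ}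
  set w : Fin n → (Fin n → ℝ) → ℝ :=
    fun i => if 1 < p i then (fun z : ℝ => |z| ^ t i) ∘ v else v with hw
  have hw_cd : ∀ i, ContDiff ℝ 1 (w i) := by
    intro i
    simp only [hw]
    split_ifs with h
    · exact (contDiff_abs_rpow (hti_of_lt i h)).comp hv
    · exact hv
  have hw_cs : ∀ i, HasCompactSupport (w i) := by
    intro i
    simp only [hw]
    split_ifs with h
    · exact h2v.comp_left (by
        simp [Real.zero_rpow (by linarith [hti_of_lt i h] : t i ≠ 0)])
    · exact h2v
  have hw_norm : ∀ i x, (‖w i x‖₊ : ℝ≥0∞) = (‖v x‖₊ : ℝ≥0∞) ^ t i := by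
    intro i x
    simp only [hw]
    split_ifs with h
    · show ((‖|v x| ^ t i‖₊ : ℝ≥0) : ℝ≥0∞) = _
      rw [Real.nnnorm_rpow_of_nonneg (abs_nonneg _), Real.nnnorm_abs,
        ENNReal.coe_rpow_of_nonneg _ (by linarith [hti1 i])]
    · rw [hti_of_eq i h, ENNReal.rpow_one]
  set f : Fin n → (Fin n → ℝ) → ℝ≥0∞ :=
    fun i x => (‖fderiv ℝ (w i) x (Pi.single i 1)‖₊ : ℝ≥0∞) with hf
  have hgc : ∀ i, Continuous fun x => fderiv ℝ (w i) x (Pi.single i 1) := fun i =>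
    ((hw_cd i).continuous_fderiv one_ne_zero).clm_apply continuous_const
  have hfm : ∀ i, Measurable (f i) := fun i =>
    (hgc i).measurable.nnnorm.coe_nnreal_ennreal
  have hfb : ∀ i x, f i x ≤
      ENNReal.ofReal (t i) * ((‖v x‖₊ : ℝ≥0∞) ^ (t i - 1) * (‖D i x‖₊ : ℝ≥0∞)) := by
    intro i x
    rw [hf]
    simp only
    by_cases h : 1 < p i
    · have hfd : HasFDerivAt (w i) (absPowDeriv (t i) (v x) • fderiv ℝ v x) x := by
        simp only [hw, if_pos h]
        exact (hasDerivAt_abs_rpow (hti_of_lt i h) (v x)).comp_hasFDerivAt x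
          (hv.differentiable one_ne_zero x).hasFDerivAt
      rw [hfd.fderiv, ContinuousLinearMap.smul_apply, smul_eq_mul, nnnorm_mul,
        ENNReal.coe_mul]
      have hb : ((‖absPowDeriv (t i) (v x)‖₊ : ℝ≥0) : ℝ≥0∞)
          ≤ ENNReal.ofReal (t i) * (‖v x‖₊ : ℝ≥0∞) ^ (t i - 1) := by
        rw [← enorm_eq_nnnorm, Real.enorm_eq_ofReal_abs]
        calc ENNReal.ofReal |absPowDeriv (t i) (v x)|
            ≤ ENNReal.ofReal (t i * |v x| ^ (t i - 1)) :=
              ENNReal.ofReal_le_ofReal (abs_absPowDeriv_le (hti_of_lt i h) (v x))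
          _ = ENNReal.ofReal (t i) * (‖v x‖₊ : ℝ≥0∞) ^ (t i - 1) := by
              rw [ENNReal.ofReal_mul (by linarith [hti1 i])]
              rw [← ENNReal.ofReal_rpow_of_nonneg (abs_nonneg _) (by linarith [hti_of_lt i h])]
              rw [← Real.enorm_eq_ofReal_abs, enorm_eq_nnnorm]
      calc (‖absPowDeriv (t i) (v x)‖₊ : ℝ≥0∞) * (‖(fderiv ℝ v x) (Pi.single i 1)‖₊ : ℝ≥0∞)
          ≤ (ENNReal.ofReal (t i) * (‖v x‖₊ : ℝ≥0∞) ^ (t i - 1)) *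
            (‖(fderiv ℝ v x) (Pi.single i 1)‖₊ : ℝ≥0∞) := mul_le_mul_left hb _
        _ = ENNReal.ofReal (t i) * ((‖v x‖₊ : ℝ≥0∞) ^ (t i - 1) *
            (‖D i x‖₊ : ℝ≥0∞)) := by
            rw [hD]
            ring
    · have hti : t i = 1 := hti_of_eq i h
      have hwv : w i = v := by simp only [hw, if_neg h]
      rw [hwv, hti]
      simp [← hD]
      exact le_rfl
  -- the quantities B i and their non-degeneracy
  set B : Fin n → ℝ≥0∞ := fun i => ∫⁻ x, f i x with hB
  have hBt : ∀ i, B i ≠ ∞ := by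
    intro i
    have := lint_rpow_ne_top (μ := volume) (hgc i) ((hw_cs i).fderiv_apply ℝ _) one_pos
    simpa [ENNReal.rpow_one] using this
  have hB0 : ∀ i, B i ≠ 0 := by
    intro i hBi
    have hae : f i =ᵐ[volume] 0 := (lintegral_eq_zero_iff (hfm i)).mp hBi
    have hgae : (fun x => fderiv ℝ (w i) x (Pi.single i 1)) =ᵐ[volume] (fun _ => (0:ℝ)) := by
      filter_upwards [hae] with x hx
      have : (‖fderiv ℝ (w i) x (Pi.single i 1)‖₊ : ℝ≥0∞) = 0 := hx
      simpa using this
    have hg0 : (fun x => fderiv ℝ (w i) x (Pi.single i 1)) = (fun _ => (0:ℝ)) :=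
      (Continuous.ae_eq_iff_eq volume (hgc i) continuous_const).mp hgae
    have hf0 : ∀ x, f i x = 0 := by
      intro x
      rw [hf]
      simp only
      rw [congrFun hg0 x]
      simp
    have hw0 : ∀ x, (‖w i x‖₊ : ℝ≥0∞) = 0 := by
      intro x
      refine le_antisymm ?_ zero_le
      refine le_trans (pointwise_ftc (hw_cd i) (hw_cs i) x i) ?_
      simp only [show ∀ y : Fin n → ℝ, (‖fderiv ℝ (w i) y (Pi.single i 1)‖₊ : ℝ≥0∞) = 0
        from fun y => hf0 y]
      simp
    have hv0 : ∀ x, (‖v x‖₊ : ℝ≥0∞) = 0 := by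
      intro x
      have := hw0 x
      rw [hw_norm i x] at this
      rw [ENNReal.rpow_eq_zero_iff_of_pos (by linarith [hti1 i])] at this
      exact this
    apply hX0
    rw [hX]
    have : ∀ x, (‖v x‖₊ : ℝ≥0∞) ^ P = 0 := by
      intro x
      rw [hv0 x, ENNReal.zero_rpow_of_pos hP0]
    simp [this]
  -- step 1: pointwise FTC + splitting the power
  have step1 : X ≤ ∫⁻ x, ∏ i, (∫⁻ s, f i (update x i s)) ^ r := by
    rw [hX]
    refine lintegral_mono fun x => ?_
    calc (‖v x‖₊ : ℝ≥0∞) ^ P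
        = (‖v x‖₊ : ℝ≥0∞) ^ (∑ i, t i * r) := by rw [htr_sum]
      _ = ∏ i, (‖v x‖₊ : ℝ≥0∞) ^ (t i * r) := enn_rpow_sum _ (fun i _ => hrP i)
      _ = ∏ i, ((‖v x‖₊ : ℝ≥0∞) ^ t i) ^ r := by
          simp_rw [ENNReal.rpow_mul]
      _ ≤ ∏ i, (∫⁻ s, f i (update x i s)) ^ r := by
          refine Finset.prod_le_prod' fun i _ => ?_
          refine ENNReal.rpow_le_rpow ?_ hr0
          rw [← hw_norm i x]
          exact pointwise_ftc (hw_cd i) (hw_cs i) x i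
  -- step 2: Loomis-Whitney
  have step2 : ∫⁻ x, ∏ i, (∫⁻ s, f i (update x i s)) ^ r ≤
      (n : ℝ≥0∞) ^ ((n:ℝ)/((n:ℝ)-1)) * ∏ i, (B i) ^ r := by
    rw [hr]
    exact loomis_whitney hn f hfm hB0 hBt
  -- step 3: Hölder
  have step3 : ∀ i, B i ≤
      ENNReal.ofReal (t i) * (X ^ (1 - 1 / p i) * (A i) ^ (1 / p i)) := by
    intro i
    have hb : B i ≤ ∫⁻ x,
        ENNReal.ofReal (t i) * ((‖v x‖₊ : ℝ≥0∞) ^ (t i - 1) * (‖D i x‖₊ : ℝ≥0∞)) :=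
      lintegral_mono fun x => hfb i x
    rw [lintegral_const_mul' _ _ ENNReal.ofReal_ne_top] at hb
    refine hb.trans (mul_le_mul_right ?_ _)
    by_cases h : 1 < p i
    · have hpi1 : 0 < p i - 1 := by linarith
      have hpq : (p i / (p i - 1)).HolderConjugate (p i) :=
        (Real.HolderConjugate.conjExponent h).symm
      have hmf : AEMeasurable (fun x => (‖v x‖₊ : ℝ≥0∞) ^ (t i - 1)) volume :=
        (hvc.measurable.nnnorm.coe_nnreal_ennreal.pow_const _).aemeasurable
      have hmg : AEMeasurable (fun x => ((‖D i x‖₊ : ℝ≥0) : ℝ≥0∞)) volume :=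
        ((hDvc i).measurable.nnnorm.coe_nnreal_ennreal).aemeasurable
      have hH := ENNReal.lintegral_mul_le_Lp_mul_Lq volume hpq hmf hmg
      simp only [Pi.mul_apply] at hH
      refine hH.trans ?_
      have hexp1 : (t i - 1) * (p i / (p i - 1)) = P := by
        rw [ht]
        simp only
        field_simp
        ring
      have hexp2 : 1 / (p i / (p i - 1)) = 1 - 1 / p i := by
        field_simp
      have he1 : ∫⁻ x, ((‖v x‖₊ : ℝ≥0∞) ^ (t i - 1)) ^ (p i / (p i - 1)) = X := by
        rw [hX]
        congr 1
        ext x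
        rw [← ENNReal.rpow_mul, hexp1]
      rw [he1, hexp2]
    · have hti : t i = 1 := hti_of_eq i h
      have hpi : p i = 1 := le_antisymm (not_lt.mp h) (hp i)
      rw [hti, hpi]
      simp only [sub_self, ENNReal.rpow_zero, one_mul, div_one, ENNReal.rpow_one,
        div_self (one_ne_zero)]
      rw [hA]
      simp only
      rw [hpi]
      refine le_of_eq ?_
      congr 1
      ext x
      rw [ENNReal.rpow_one]
  -- assemble
  have hmain : X ≤ K0 * (X ^ θ * ∏ i, (A i) ^ ((1 / p i) * r)) := by
    calc X ≤ (n : ℝ≥0∞) ^ ((n:ℝ)/((n:ℝ)-1)) * ∏ i, (B i) ^ r := step1.trans step2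
      _ ≤ (n : ℝ≥0∞) ^ ((n:ℝ)/((n:ℝ)-1)) *
          ∏ i, (ENNReal.ofReal (t i) * (X ^ (1 - 1 / p i) * (A i) ^ (1 / p i))) ^ r := by
          refine mul_le_mul_right (Finset.prod_le_prod' fun i _ => ?_) _
          exact ENNReal.rpow_le_rpow (step3 i) hr0
      _ = K0 * (X ^ θ * ∏ i, (A i) ^ ((1 / p i) * r)) := by
          rw [hK0]
          simp_rw [ENNReal.mul_rpow_of_nonneg _ _ hr0]
          rw [Finset.prod_mul_distrib, Finset.prod_mul_distrib]
          simp_rw [← ENNReal.rpow_mul]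
          rw [← hθsum, enn_rpow_sum _ (fun i _ => mul_nonneg (hei0 i) hr0)]
          ring
  have hXθ0 : X ^ θ ≠ 0 := by
    simp only [ne_eq, ENNReal.rpow_eq_zero_iff, not_or]
    exact ⟨fun ⟨h, _⟩ => hX0 h, fun ⟨h, _⟩ => hXt h⟩
  have hXθt : X ^ θ ≠ ∞ := ENNReal.rpow_ne_top_of_nonneg hθ0 hXt
  have hcancel : X ^ (1 - θ) ≤ K0 * ∏ i, (A i) ^ ((1 / p i) * r) := by
    have hsplit : X ^ θ * X ^ (1 - θ) = X := by
      rw [← ENNReal.rpow_add_of_nonneg _ _ hθ0 (by linarith)]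
      norm_num
    have h2 : X ^ θ * X ^ (1 - θ) ≤ X ^ θ * (K0 * ∏ i, (A i) ^ ((1 / p i) * r)) := by
      rw [hsplit]
      calc X ≤ K0 * (X ^ θ * ∏ i, (A i) ^ ((1 / p i) * r)) := hmain
        _ = X ^ θ * (K0 * ∏ i, (A i) ^ ((1 / p i) * r)) := by ring
    exact (ENNReal.mul_le_mul_iff_right hXθ0 hXθt).mp h2
  -- raise to the power (n-1)/n
  have hfinal := ENNReal.rpow_le_rpow hcancel he0
  rw [← ENNReal.rpow_mul] at hfinal
  have hpow1 : (1 - θ) * (((n:ℝ) - 1) / n) = 1 / P := by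
    rw [h1θ, hr, hPeq]
    field_simp
  rw [hpow1] at hfinal
  refine hfinal.trans ?_
  rw [ENNReal.mul_rpow_of_nonneg _ _ he0]
  refine mul_le_mul_right ?_ _
  rw [← ENNReal.prod_rpow_of_nonneg he0]
  simp_rw [← ENNReal.rpow_mul]
  have hexp3 : ∀ i, 1 / p i * r * (((n:ℝ) - 1) / n) = 1 / (p i * n) := by
    intro i
    have := hpi0 i
    rw [hr]
    field_simp
  calc ∏ i, (A i) ^ (1 / p i * r * (((n:ℝ) - 1) / n))
      ≤ ∏ i, (∑ j, A j) ^ (1 / p i * r * (((n:ℝ) - 1) / n)) := by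
        refine Finset.prod_le_prod' fun i _ => ?_
        refine ENNReal.rpow_le_rpow ?_ ?_
        · exact Finset.single_le_sum (fun j _ => zero_le) (Finset.mem_univ i)
        · rw [hexp3 i]
          have : (0:ℝ) < p i * n := mul_pos (hpi0 i) hn0
          positivity
    _ = (∑ j, A j) ^ (∑ i, 1 / p i * r * (((n:ℝ) - 1) / n)) := by
        rw [enn_rpow_sum _ (fun i _ => by
          rw [hexp3 i]
          have : (0:ℝ) < p i * n := mul_pos (hpi0 i) hn0
          positivity)]
    _ = (∑ j, A j) ^ (1 / pbar n p) := by
        congr 1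
        have hterm : ∀ i : Fin n, 1 / p i * r * (((n:ℝ) - 1) / n) = (1 / p i) / n := by
          intro i
          have := hpi0 i
          rw [hr]
          field_simp
        simp_rw [hterm]
        rw [← Finset.sum_div, pbar, one_div_div]



end Stmt11Aux

/-- **anisotropic Poincaré–Sobolev inequality.**
Let `n ≥ 2`, `1 ≤ pᵢ < ∞`, `1/p = (1/n)∑ᵢ 1/pᵢ` with `∑ᵢ 1/pᵢ > 1`, `p* = np/(n−p)`.
Then there is `C = C(n, p₁,…,pₙ)` such that for all `v ∈ C_c^∞(ℝⁿ)`: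
`(∫ |v|^{p*})^{1/p*} ≤ C (∑ᵢ ∫ |∂v/∂xᵢ|^{pᵢ})^{1/p}`. -/
theorem stmt11 (n : ℕ) (hn : 2 ≤ n) (p : Fin n → ℝ) (hp : ∀ i, 1 ≤ p i)
    (hsum : 1 < ∑ i, 1 / p i) :
    ∃ C : ℝ, 0 < C ∧
      ∀ v : EuclideanSpace ℝ (Fin n) → ℝ,
        ContDiff ℝ (⊤ : ℕ∞) v → HasCompactSupport v →
        (∫ x, |v x| ^ pstar n p) ^ (1 / pstar n p) ≤
          C * (∑ i, ∫ x, |fderiv ℝ v x (EuclideanSpace.single i 1)| ^ p i) ^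
            (1 / pbar n p) := by
  classical
  obtain ⟨K, hK0, hKt, hcore⟩ := Stmt11Aux.core hn hp hsum
  have hn0 : (0:ℝ) < n := by
    have : (2:ℝ) ≤ n := by exact_mod_cast hn
    linarith
  have hS0 : (0:ℝ) < ∑ i, 1 / p i := by linarith
  have hP0 : 0 < pstar n p := by linarith [Stmt11Aux.pstar_pos hn hp hsum]
  have hpb0 : 0 < pbar n p := by
    rw [pbar]
    positivity
  refine ⟨K.toReal, ENNReal.toReal_pos hK0 hKt, ?_⟩
  intro v hv h2v
  have hv1 : ContDiff ℝ 1 v := hv.of_le (by exact_mod_cast le_top)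
  set E := EuclideanSpace.equiv (Fin n) ℝ with hE
  set u : (Fin n → ℝ) → ℝ := v ∘ E.symm with hu
  have hu1 : ContDiff ℝ 1 u := hv1.comp E.symm.contDiff
  have hu2 : HasCompactSupport u := h2v.comp_homeomorph E.symm.toHomeomorph
  have key := hcore u hu1 hu2
  have hmp := EuclideanSpace.volume_preserving_symm_measurableEquiv_toLp (Fin n)
  have hmeqE : ∀ x : EuclideanSpace ℝ (Fin n),
      E.symm ((MeasurableEquiv.toLp 2 (Fin n → ℝ)).symm x) = x := by
    intro x
    rfl
  -- (a) transfer of the LHS integral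
  have ha : (∫⁻ y, (‖u y‖₊ : ℝ≥0∞) ^ pstar n p) =
      ∫⁻ x, (‖v x‖₊ : ℝ≥0∞) ^ pstar n p := by
    rw [← hmp.lintegral_comp (hu1.continuous.measurable.nnnorm.coe_nnreal_ennreal.pow_const _)]
    refine lintegral_congr fun x => ?_
    rw [hu]
    simp only [Function.comp_apply, hmeqE x]
  -- (b) transfer of the derivative integrals
  have hfdu : ∀ (i : Fin n) (y : Fin n → ℝ),
      fderiv ℝ u y (Pi.single i 1) =
        fderiv ℝ v (E.symm y) (EuclideanSpace.single i (1:ℝ)) := by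
    intro i y
    rw [hu, fderiv_comp y (hv1.differentiable one_ne_zero _) E.symm.differentiableAt,
      E.symm.fderiv]
    rfl
  have hDvc : ∀ i : Fin n,
      Continuous fun x : EuclideanSpace ℝ (Fin n) =>
        fderiv ℝ v x (EuclideanSpace.single i (1:ℝ)) := fun i =>
    (hv1.continuous_fderiv one_ne_zero).clm_apply continuous_const
  have hb : ∀ i : Fin n, (∫⁻ y, (‖fderiv ℝ u y (Pi.single i 1)‖₊ : ℝ≥0∞) ^ p i) =
      ∫⁻ x, (‖fderiv ℝ v x (EuclideanSpace.single i (1:ℝ))‖₊ : ℝ≥0∞) ^ p i := by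
    intro i
    have hgm : Measurable fun y : Fin n → ℝ =>
        (‖fderiv ℝ v (E.symm y) (EuclideanSpace.single i (1:ℝ))‖₊ : ℝ≥0∞) ^ p i := by
      exact (((hDvc i).comp E.symm.continuous).measurable.nnnorm.coe_nnreal_ennreal.pow_const _)
    calc ∫⁻ y, (‖fderiv ℝ u y (Pi.single i 1)‖₊ : ℝ≥0∞) ^ p i
        = ∫⁻ y, (‖fderiv ℝ v (E.symm y) (EuclideanSpace.single i (1:ℝ))‖₊ : ℝ≥0∞) ^ p i := by
          refine lintegral_congr fun y => ?_
          rw [hfdu i y]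
      _ = ∫⁻ x, (‖fderiv ℝ v (E.symm ((MeasurableEquiv.toLp 2 (Fin n → ℝ)).symm x))
            (EuclideanSpace.single i (1:ℝ))‖₊ : ℝ≥0∞) ^ p i := (hmp.lintegral_comp hgm).symm
      _ = ∫⁻ x, (‖fderiv ℝ v x (EuclideanSpace.single i (1:ℝ))‖₊ : ℝ≥0∞) ^ p i := by
          refine lintegral_congr fun x => ?_
          rw [hmeqE x]
  rw [ha] at key
  simp_rw [hb] at key
  set XE : ℝ≥0∞ := ∫⁻ x, (‖v x‖₊ : ℝ≥0∞) ^ pstar n p with hXE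
  set AE : Fin n → ℝ≥0∞ := fun i =>
    ∫⁻ x, (‖fderiv ℝ v x (EuclideanSpace.single i (1:ℝ))‖₊ : ℝ≥0∞) ^ p i with hAE
  have hAEt : ∀ i, AE i ≠ ∞ := fun i =>
    Stmt11Aux.lint_rpow_ne_top (μ := volume) (hDvc i) (h2v.fderiv_apply ℝ _) (by linarith [hp i])
  -- real-integral identifications
  have hreal1 : (∫ x, |v x| ^ pstar n p) = XE.toReal := by
    rw [integral_eq_lintegral_of_nonneg_ae
      (ae_of_all _ fun x => Real.rpow_nonneg (abs_nonneg _) _)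
      ((hv.continuous.abs.rpow_const fun x => Or.inr hP0.le).aestronglyMeasurable)]
    congr 1
    refine lintegral_congr fun x => ?_
    rw [← ENNReal.ofReal_rpow_of_nonneg (abs_nonneg _) hP0.le, ← Real.enorm_eq_ofReal_abs, enorm_eq_nnnorm]
  have hreal2 : ∀ i, (∫ x, |fderiv ℝ v x (EuclideanSpace.single i (1:ℝ))| ^ p i)
      = (AE i).toReal := by
    intro i
    rw [integral_eq_lintegral_of_nonneg_ae
      (ae_of_all _ fun x => Real.rpow_nonneg (abs_nonneg _) _)
      (((hDvc i).abs.rpow_const fun x => Or.inr (by linarith [hp i])).aestronglyMeasurable)]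
    congr 1
    refine lintegral_congr fun x => ?_
    rw [← ENNReal.ofReal_rpow_of_nonneg (abs_nonneg _) (by linarith [hp i]),
      ← Real.enorm_eq_ofReal_abs, enorm_eq_nnnorm]
  rw [hreal1]
  have hrw : (∑ i, ∫ x, |fderiv ℝ v x (EuclideanSpace.single i 1)| ^ p i)
      = (∑ i, AE i).toReal := by
    rw [ENNReal.toReal_sum (fun i _ => hAEt i)]
    exact Finset.sum_congr rfl fun i _ => hreal2 i
  rw [hrw]
  have hRfin : K * (∑ i, AE i) ^ (1 / pbar n p) ≠ ∞ := by
    refine ENNReal.mul_ne_top hKt ?_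
    refine ENNReal.rpow_ne_top_of_nonneg (by positivity) ?_
    exact (ENNReal.sum_lt_top.mpr fun i _ => (hAEt i).lt_top).ne
  calc XE.toReal ^ (1 / pstar n p) = (XE ^ (1 / pstar n p)).toReal :=
        ENNReal.toReal_rpow _ _
    _ ≤ (K * (∑ i, AE i) ^ (1 / pbar n p)).toReal := ENNReal.toReal_mono hRfin key
    _ = K.toReal * ((∑ i, AE i) ^ (1 / pbar n p)).toReal := ENNReal.toReal_mul
    _ = K.toReal * (∑ i, AE i).toReal ^ (1 / pbar n p) := by rw [ENNReal.toReal_rpow]
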